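/- If β is a nonempty string that occurs at least twice in a string w, then the right-extension r(β) of β is a well-defined right-maximal repeat of w: the process of extending β by the unique common right-adjacent character terminates. -/
import Mathlib


open Set List

variable {A : Type*}

/-- `β` occurs in `w` at (0-indexed) position `i`, i.e. `w[i..i+|β|-1] = β`. -/
def OccursAt (w β : List A) (i : ℕ) : Prop := β <+: w.drop i

/-- A repeat of `w`: a nonempty string occurring in `w` at two distinct positions. -/
def IsRepeat (w β : List A) : Prop :=
  β ≠ [] ∧ ∃ i j, i ≠ j ∧ OccursAt w β i ∧ OccursAt w β j

/-- A right-maximal repeat of `w`: a repeat with two occurrences whose right-adjacent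
characters differ.  The right-adjacent character of the occurrence at `i` is
`w[i+|β|]?  : Option A`; the value `none` (an occurrence at the right end of `w`)
plays the role of the special character distinct from all alphabet characters. -/
def IsRMRepeat (w β : List A) : Prop :=
  β ≠ [] ∧ ∃ i j, i ≠ j ∧ OccursAt w β i ∧ OccursAt w β j ∧
    w[i + β.length]? ≠ w[j + β.length]?

/-- `RightExtClosure w β α` says that `α = r(β)`, the right-maximal repeat obtained
from `β` by repeatedly appending the unique common right-adjacent character of all
of its occurrences: equivalently, `α` is a right-maximal repeat of `w` extending `β`
such that no intermediate extension `γ` (with `β ≤ γ < α`) is already right-maximal. -/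
def RightExtClosure (w β α : List A) : Prop :=
  IsRMRepeat w α ∧ β <+: α ∧
    ∀ γ, β <+: γ → γ <+: α → γ ≠ α → ¬ IsRMRepeat w γ

section Aux

variable {A : Type*}

lemma occ_mono {w γ α : List A} {i : ℕ} (h : γ <+: α) (h' : OccursAt w α i) :
    OccursAt w γ i := h.trans h'

lemma occ_getElem? {w α : List A} {i n : ℕ} (h : OccursAt w α i) (hn : n < α.length) :
    w[i + n]? = some (α[n]'hn) := by
  obtain ⟨t, ht⟩ := h
  rw [← List.getElem?_drop, ← ht, List.getElem?_append, if_pos hn,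
    List.getElem?_eq_getElem hn]

lemma occ_add_le {w α : List A} {i : ℕ} (hne : α ≠ []) (h : OccursAt w α i) :
    i + α.length ≤ w.length := by
  have h1 : 0 < α.length := List.length_pos_iff.mpr hne
  have h2 := h.length_le
  rw [List.length_drop] at h2
  omega

lemma occ_extend {w γ : List A} {i : ℕ} {c : A} (h : OccursAt w γ i)
    (hc : w[i + γ.length]? = some c) : OccursAt w (γ ++ [c]) i := by
  rw [OccursAt, List.prefix_iff_eq_take] at h ⊢
  rw [List.length_append, List.length_singleton, List.take_succ, ← h,
    List.getElem?_drop, hc]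
  rfl

lemma repeat_step {w β : List A} (hβ : IsRepeat w β) (hRM : ¬ IsRMRepeat w β) :
    ∃ c, IsRepeat w (β ++ [c]) ∧ β.length < w.length := by
  obtain ⟨hne, i, j, hij, hi, hj⟩ := hβ
  wlog hlt : i < j generalizing i j
  · exact this j i hij.symm hj hi (by omega)
  have hjle := occ_add_le hne hj
  have hiw : i + β.length < w.length := by omega
  obtain ⟨c, hc⟩ : ∃ c, w[i + β.length]? = some c :=
    ⟨w[i + β.length], List.getElem?_eq_getElem hiw⟩
  have hcj : w[j + β.length]? = some c := by
    by_contra h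
    exact hRM ⟨hne, i, j, hij, hi, hj, by rw [hc]; exact fun e => h e.symm⟩
  exact ⟨c, ⟨by simp, i, j, hij, occ_extend hi hc, occ_extend hj hcj⟩, by omega⟩

lemma closure_self {w β : List A} (hRM : IsRMRepeat w β) : RightExtClosure w β β :=
  ⟨hRM, List.prefix_refl _, fun γ h1 h2 hne _ =>
    hne (h2.eq_of_length (le_antisymm h2.length_le h1.length_le))⟩

lemma closure_of_cons {w β β' α : List A} (hRM : ¬ IsRMRepeat w β) (hc : β <+: β')
    (hlen : β'.length = β.length + 1) (h : RightExtClosure w β' α) :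
    RightExtClosure w β α := by
  refine ⟨h.1, hc.trans h.2.1, fun γ h1 h2 hne => ?_⟩
  rcases le_or_gt β'.length γ.length with hl | hl
  · exact h.2.2 γ (List.prefix_of_prefix_length_le h.2.1 h2 hl) h2 hne
  · have hγβ : γ = β := (h1.eq_of_length (le_antisymm h1.length_le (by omega))).symm
    rw [hγβ]; exact hRM

lemma exists_closure (w : List A) :
    ∀ n β, IsRepeat w β → w.length - β.length ≤ n → ∃ α, RightExtClosure w β α := by
  intro n
  induction n with
  | zero =>
    intro β hβ hn
    by_cases hRM : IsRMRepeat w β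
    · exact ⟨β, closure_self hRM⟩
    · obtain ⟨c, _, hlen⟩ := repeat_step hβ hRM
      omega
  | succ n ih =>
    intro β hβ hn
    by_cases hRM : IsRMRepeat w β
    · exact ⟨β, closure_self hRM⟩
    · obtain ⟨c, hrep, hlen⟩ := repeat_step hβ hRM
      obtain ⟨α, hα⟩ := ih (β ++ [c]) hrep (by simp; omega)
      exact ⟨α, closure_of_cons hRM (List.prefix_append _ _) (by simp) hα⟩

lemma closure_take_eq {w β α₁ α₂ : List A} (hβne : β ≠ [])
    (h1 : RightExtClosure w β α₁) (h2 : RightExtClosure w β α₂)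
    (hle : α₁.length ≤ α₂.length) :
    ∀ n, n ≤ α₁.length → α₁.take n = α₂.take n := by
  intro n
  induction n with
  | zero => simp
  | succ n ihn =>
    intro hn1
    have hn : n ≤ α₁.length := by omega
    have hn2 : n < α₂.length := by omega
    rcases le_or_gt (n + 1) β.length with hb | hb
    · have e1 := List.prefix_iff_eq_take.mp h1.2.1
      have e2 := List.prefix_iff_eq_take.mp h2.2.1
      have : β.take (n+1) = α₁.take (n+1) := by
        rw [e1, List.take_take, min_eq_left hb]
      rw [← this, e2, List.take_take, min_eq_left hb]
    · set γ := α₁.take n with hγdef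
      have hγ2 : γ = α₂.take n := ihn hn
      have hγlen : γ.length = n := by simp [hγdef]; omega
      have hβγ : β <+: γ :=
        List.prefix_of_prefix_length_le h1.2.1 (List.take_prefix n α₁) (by omega)
      have hγne1 : γ ≠ α₁ := by
        intro e
        have := congrArg List.length e
        omega
      have hnRM : ¬ IsRMRepeat w γ := h1.2.2 γ hβγ (List.take_prefix _ _) hγne1
      obtain ⟨_, i, j, hij, hi1, hj1, -⟩ := h1.1
      obtain ⟨-, k, l, hkl, hk2, -, -⟩ := h2.1
      have key : ∀ p, OccursAt w α₁ p → p ≠ k → (α₁[n]'(by omega) = α₂[n]'hn2) := by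
        intro p hp hpk
        have e1 : w[p + n]? = some (α₁[n]'(by omega)) := occ_getElem? hp (by omega)
        have e2 : w[k + n]? = some (α₂[n]'hn2) := occ_getElem? hk2 hn2
        have heq : w[p + n]? = w[k + n]? := by
          by_contra hne'
          apply hnRM
          refine ⟨fun e => hβne (List.prefix_nil.mp (e ▸ hβγ)), p, k, hpk,
            occ_mono (List.take_prefix n α₁) hp,
            hγ2 ▸ occ_mono (List.take_prefix n α₂) hk2, ?_⟩
          rw [hγlen]; exact hne'
        rw [e1, e2] at heq
        exact Option.some.inj heq
      have hmain : (α₁[n]'(by omega)) = α₂[n]'hn2 := by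
        rcases eq_or_ne i k with rfl | h
        · exact key j hj1 (Ne.symm hij)
        · exact key i hi1 h
      rw [List.take_succ, List.take_succ, ← hγ2, ← hγdef,
        List.getElem?_eq_getElem (show n < α₁.length by omega),
        List.getElem?_eq_getElem hn2, hmain]

lemma closure_unique_prefix {w β α₁ α₂ : List A} (hβne : β ≠ [])
    (h1 : RightExtClosure w β α₁) (h2 : RightExtClosure w β α₂)
    (hle : α₁.length ≤ α₂.length) : α₁ = α₂ := by
  have htake := closure_take_eq hβne h1 h2 hle α₁.length le_rfl
  rw [List.take_of_length_le le_rfl] at htake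
  have hpre : α₁ <+: α₂ := by rw [htake]; exact List.take_prefix _ _
  by_contra hne
  exact (h2.2.2 α₁ h1.2.1 hpre hne) h1.1

end Aux

/-- for every repeat `β` of `w`, the right-extension `r(β)` is a well-defined
right-maximal repeat of `w`: the extension process terminates and its result is unique. -/
theorem rightExtClosure_existsUnique (w β : List A) (hβ : IsRepeat w β) :
    ∃! α, RightExtClosure w β α := by
  obtain ⟨α, hα⟩ := exists_closure w (w.length - β.length) β hβ le_rfl
  refine ⟨α, hα, fun α' hα' => ?_⟩
  rcases le_total α'.length α.length with h | h
  · exact closure_unique_prefix hβ.1 hα' hα h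
  · exact (closure_unique_prefix hβ.1 hα hα' h).symm
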